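/- Let k ≥ 2 and let M be a k×k real matrix with nonnegative entries summing to 1. Let c > 0 and suppose |det(M)| ≥ c. Then every complex eigenvalue λ of M satisfies |λ| ≥ c·(k−1)^{k−1}. (This is the lower-bound part of the paper's eigenvalue lemma, used to lower bound the minimum absolute eigenvalue of an empirical joint PMF matrix and hence upper bound the spectral norm of its inverse.) -/

import Mathlib

open Finset Matrix Polynomial

lemma amgm_erase (k : ℕ) (hk : 2 ≤ k) (r : Fin k → ℝ) (hr : ∀ i, 0 ≤ r i)
    (hsum : ∑ i, r i = 1) (j : Fin k) :
    ∏ i ∈ univ.erase j, r i ≤ ((k : ℝ) - 1)⁻¹ ^ (k - 1) := by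
  set n := k - 1 with hn
  have hn0 : n ≠ 0 := by omega
  have hnR : (0 : ℝ) < (n : ℝ) := by exact_mod_cast Nat.pos_of_ne_zero hn0
  have hcard : (univ.erase j).card = n := by
    rw [Finset.card_erase_of_mem (mem_univ j), Finset.card_univ, Fintype.card_fin]
  have hS : ∑ i ∈ univ.erase j, r i ≤ 1 := by
    have h := Finset.add_sum_erase univ r (mem_univ j)
    nlinarith [hr j]
  have hw : ∀ i ∈ univ.erase j, (0:ℝ) ≤ (n : ℝ)⁻¹ := fun i _ => by positivity
  have hw' : ∑ _i ∈ univ.erase j, ((n : ℝ))⁻¹ = 1 := by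
    rw [Finset.sum_const, hcard, nsmul_eq_mul]
    field_simp
  have hz : ∀ i ∈ univ.erase j, 0 ≤ r i := fun i _ => hr i
  have hgm := Real.geom_mean_le_arith_mean_weighted (univ.erase j)
    (fun _ => ((n : ℝ))⁻¹) r hw hw' hz
  have hprod : ∏ i ∈ univ.erase j, r i ^ ((n:ℝ))⁻¹
      = (∏ i ∈ univ.erase j, r i) ^ ((n:ℝ))⁻¹ :=
    Real.finset_prod_rpow _ _ hz _
  have hrhs : ∑ i ∈ univ.erase j, ((n:ℝ))⁻¹ * r i ≤ (n:ℝ)⁻¹ := by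
    rw [← Finset.mul_sum]
    calc ((n:ℝ))⁻¹ * ∑ i ∈ univ.erase j, r i ≤ (n:ℝ)⁻¹ * 1 :=
          mul_le_mul_of_nonneg_left hS (by positivity)
      _ = (n:ℝ)⁻¹ := mul_one _
  have key : (∏ i ∈ univ.erase j, r i) ^ ((n:ℝ))⁻¹ ≤ (n:ℝ)⁻¹ := by
    rw [← hprod]; exact hgm.trans hrhs
  have hP0 : 0 ≤ ∏ i ∈ univ.erase j, r i := Finset.prod_nonneg hz
  have hfin := pow_le_pow_left₀ (Real.rpow_nonneg hP0 _) key n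
  rw [Real.rpow_inv_natCast_pow hP0 hn0] at hfin
  have hcast : ((n : ℝ)) = (k : ℝ) - 1 := by
    rw [hn]; push_cast [Nat.cast_sub (by omega : 1 ≤ k)]; ring
  rwa [hcast] at hfin

lemma adj_col_bound {k : ℕ} (M : Matrix (Fin k) (Fin k) ℝ)
    (hnn : ∀ i j, 0 ≤ M i j) (j : Fin k) :
    ∑ i, |M.adjugate i j| ≤ ∏ r ∈ univ.erase j, (∑ c, M r c) := by
  classical
  have stepA : ∀ i, |M.adjugate i j| ≤
      ∑ σ : Equiv.Perm (Fin k), (if σ j = i then (1:ℝ) else 0) *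
        ∏ c ∈ univ.erase j, M c (σ c) := by
    intro i
    rw [Matrix.adjugate_apply, ← Matrix.det_transpose, Matrix.det_apply']
    refine (Finset.abs_sum_le_sum_abs _ _).trans ?_
    apply Finset.sum_le_sum; intro σ _
    have habs : ∀ x : ℝ, |((Equiv.Perm.sign σ : ℤ) : ℝ) * x| = |x| := by
      rcases Int.units_eq_one_or (Equiv.Perm.sign σ) with h | h <;> simp [h]
    rw [habs]
    have hprodsplit : (∏ c, ((M.updateRow j (Pi.single i 1))ᵀ (σ c) c))
        = (Pi.single (M := fun _ : Fin k => ℝ) i 1 (σ j)) * ∏ c ∈ univ.erase j, M c (σ c) := by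
      rw [← Finset.mul_prod_erase univ _ (mem_univ j)]
      congr 1
      · simp [Matrix.transpose_apply]
      · refine Finset.prod_congr rfl fun c hc => ?_
        simp [Matrix.transpose_apply, Matrix.updateRow_apply, (Finset.mem_erase.mp hc).1]
    rw [hprodsplit, abs_mul]
    have h1 : |Pi.single (M := fun _ : Fin k => ℝ) i 1 (σ j)| = if σ j = i then 1 else 0 := by
      rcases eq_or_ne (σ j) i with h | h <;> simp [Pi.single_apply, h]
    rw [h1, abs_of_nonneg (Finset.prod_nonneg fun c _ => hnn c (σ c))]
  have hsubP : ∀ f : Fin k → ℝ, ∏ c ∈ univ.erase j, f c = ∏ c : {x : Fin k // x ≠ j}, f c := by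
    intro f
    exact Finset.prod_subtype _ (by simp) f
  calc ∑ i, |M.adjugate i j|
      ≤ ∑ i, ∑ σ : Equiv.Perm (Fin k), (if σ j = i then (1:ℝ) else 0) *
          ∏ c ∈ univ.erase j, M c (σ c) := Finset.sum_le_sum fun i _ => stepA i
    _ = ∑ σ : Equiv.Perm (Fin k), ∑ i, (if σ j = i then (1:ℝ) else 0) *
          ∏ c ∈ univ.erase j, M c (σ c) := Finset.sum_comm
    _ = ∑ σ : Equiv.Perm (Fin k), ∏ c ∈ univ.erase j, M c (σ c) := by
        refine Finset.sum_congr rfl fun σ _ => ?_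
        simp
    _ = ∑ σ : Equiv.Perm (Fin k), ∏ c : {x : Fin k // x ≠ j}, M c (σ c) := by
        refine Finset.sum_congr rfl fun σ _ => hsubP _
    _ ≤ ∏ r ∈ univ.erase j, (∑ c, M r c) := by
        rw [hsubP]
        -- inject permutations into functions
        set T : Equiv.Perm (Fin k) → ({x : Fin k // x ≠ j} → Fin k) :=
          fun σ c => σ c with hT
        have hTinj : ∀ σ ∈ (univ : Finset (Equiv.Perm (Fin k))),
            ∀ τ ∈ (univ : Finset (Equiv.Perm (Fin k))), T σ = T τ → σ = τ := by
          intro σ _ τ _ h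
          have hagree : ∀ c : Fin k, c ≠ j → σ c = τ c := fun c hc => congrFun h ⟨c, hc⟩
          refine Equiv.ext fun c => ?_
          by_cases hc : c = j
          · subst hc
            by_cases h2 : τ.symm (σ c) = c
            · calc σ c = τ (τ.symm (σ c)) := (Equiv.apply_symm_apply τ _).symm
                _ = τ c := by rw [h2]
            · exfalso
              have h3 : σ (τ.symm (σ c)) = σ c := by
                rw [hagree _ h2, Equiv.apply_symm_apply]
              exact h2 (σ.injective h3)
          · exact hagree c hc
        have himg : ∑ σ : Equiv.Perm (Fin k), ∏ c : {x : Fin k // x ≠ j}, M c (σ c)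
            = ∑ g ∈ (univ : Finset (Equiv.Perm (Fin k))).image T,
                ∏ c : {x : Fin k // x ≠ j}, M c (g c) := by
          rw [Finset.sum_image hTinj]
        rw [himg]
        have hle : ∑ g ∈ (univ : Finset (Equiv.Perm (Fin k))).image T,
                ∏ c : {x : Fin k // x ≠ j}, M c (g c)
            ≤ ∑ g : {x : Fin k // x ≠ j} → Fin k, ∏ c : {x : Fin k // x ≠ j}, M c (g c) :=
          Finset.sum_le_sum_of_subset_of_nonneg (Finset.subset_univ _)
            (fun g _ _ => Finset.prod_nonneg fun c _ => hnn c (g c))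
        refine hle.trans ?_
        rw [show (∏ c : {x : Fin k // x ≠ j}, (∑ d, M c d))
            = ∑ g ∈ Fintype.piFinset (fun _ : {x : Fin k // x ≠ j} => (univ : Finset (Fin k))),
                ∏ c : {x : Fin k // x ≠ j}, M c (g c) from Finset.prod_univ_sum _ _,
          Fintype.piFinset_univ]

/-- Let `k ≥ 2` and let `M` be a `k × k` real matrix with nonnegative entries summing
to 1, and suppose `|det M| ≥ c` with `c > 0`.  Then every complex eigenvalue `μ` of `M`
(i.e. every root of the characteristic polynomial of `M` over `ℂ`) satisfies
`|μ| ≥ c·(k−1)^{k−1}`. -/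
theorem eigenvalue_lower_bound (k : ℕ) (hk : 2 ≤ k)
    (M : Matrix (Fin k) (Fin k) ℝ)
    (hnn : ∀ i j, 0 ≤ M i j) (hsum : ∑ i, ∑ j, M i j = 1)
    (c : ℝ) (hc : 0 < c) (hdet : c ≤ |M.det|) :
    ∀ μ : ℂ, (M.map (Complex.ofReal)).charpoly.IsRoot μ →
      c * ((k : ℝ) - 1) ^ (k - 1) ≤ ‖μ‖ := by
  intro μ hroot
  classical
  set A : Matrix (Fin k) (Fin k) ℂ := M.map Complex.ofReal with hA
  have hfun : (Complex.ofReal : ℝ → ℂ) = ⇑Complex.ofRealHom := rfl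
  have hdetA : A.det = (M.det : ℂ) := by
    have h := RingHom.map_det Complex.ofRealHom M
    rw [RingHom.mapMatrix_apply] at h
    rw [hA, hfun, ← h]
  have hdetA0 : A.det ≠ 0 := by
    rw [hdetA]
    simp only [ne_eq, Complex.ofReal_eq_zero]
    intro h; rw [h] at hdet; simp at hdet; linarith
  have hsm : ∀ (a : ℂ) (v : Fin k → ℂ),
      v ᵥ* (a • (1 : Matrix (Fin k) (Fin k) ℂ)) = a • v := by
    intro a v
    funext i
    simp [Matrix.vecMul, dotProduct, Matrix.smul_apply, Matrix.one_apply,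
      mul_ite, mul_comm, mul_left_comm]
  -- the matrix μ•1 - A is singular
  have hsing : (μ • (1 : Matrix (Fin k) (Fin k) ℂ) - A).det = 0 := by
    have h1 : Polynomial.eval μ A.charpoly = 0 := hroot
    have h2 : Polynomial.eval μ A.charpoly
        = ((charmatrix A).map (Polynomial.eval μ)).det := by
      rw [Matrix.charpoly]
      exact (RingHom.map_det (Polynomial.evalRingHom μ) (charmatrix A))
    have h3 : (charmatrix A).map (Polynomial.eval μ)
        = μ • (1 : Matrix (Fin k) (Fin k) ℂ) - A := by
      ext i j
      by_cases h : i = j <;>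
        simp [charmatrix_apply, Matrix.map_apply, Matrix.one_apply, Matrix.sub_apply,
          Matrix.smul_apply, Matrix.diagonal_apply, h]
    rw [h2, h3] at h1
    exact h1
  obtain ⟨w, hw0, hwA⟩ := Matrix.exists_vecMul_eq_zero_iff.mpr hsing
  have hwMu : w ᵥ* A = μ • w := by
    have h := hwA
    rw [Matrix.vecMul_sub, sub_eq_zero] at h
    rw [← h, hsm]
  have hmu0 : μ ≠ 0 := by
    intro h
    apply hdetA0
    rw [← Matrix.exists_vecMul_eq_zero_iff]
    exact ⟨w, hw0, by rw [hwMu, h, zero_smul]⟩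
  -- left eigenvector of the adjugate
  have hadj : w ᵥ* A.adjugate = (A.det / μ) • w := by
    have h1 : (w ᵥ* A) ᵥ* A.adjugate = w ᵥ* (A * A.adjugate) :=
      Matrix.vecMul_vecMul w A A.adjugate
    rw [hwMu, Matrix.mul_adjugate, hsm, Matrix.smul_vecMul] at h1
    have h2 : (μ⁻¹ * μ) • (w ᵥ* A.adjugate) = μ⁻¹ • A.det • w := by
      rw [mul_smul, h1]
    rw [inv_mul_cancel₀ hmu0, one_smul] at h2
    rw [h2, smul_smul]
    ring_nf
  -- pick the coordinate with maximal absolute value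
  obtain ⟨j, -, hj⟩ := Finset.exists_max_image (univ : Finset (Fin k))
    (fun i => ‖w i‖) ⟨⟨0, by omega⟩, mem_univ _⟩
  have hwj0 : w j ≠ 0 := by
    intro h
    apply hw0
    funext i
    have := hj i (mem_univ i)
    rw [h] at this
    simp only [norm_zero] at this
    exact norm_eq_zero.mp (le_antisymm this (norm_nonneg _))
  have hwjpos : 0 < ‖w j‖ := by
    simpa [norm_pos_iff] using hwj0
  -- column-sum estimate
  have hcol : ‖A.det / μ‖ * ‖w j‖
      ≤ (∑ i, |M.adjugate i j|) * ‖w j‖ := by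
    have hentry : (w ᵥ* A.adjugate) j = (A.det / μ) * w j := by
      rw [hadj]; simp
    have hadjmap : A.adjugate = (M.adjugate).map Complex.ofReal := by
      have h := RingHom.map_adjugate Complex.ofRealHom M
      rw [RingHom.mapMatrix_apply, RingHom.mapMatrix_apply] at h
      rw [hA, hfun, ← h]
    calc ‖A.det / μ‖ * ‖w j‖
        = ‖(A.det / μ) * w j‖ := (norm_mul _ _).symm
      _ = ‖(w ᵥ* A.adjugate) j‖ := by rw [hentry]
      _ = ‖∑ i, w i * A.adjugate i j‖ := by
          simp [Matrix.vecMul, dotProduct]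
      _ ≤ ∑ i, ‖w i * A.adjugate i j‖ := norm_sum_le _ _
      _ ≤ (∑ i, |M.adjugate i j|) * ‖w j‖ := by
          rw [Finset.sum_mul]
          refine Finset.sum_le_sum fun i _ => ?_
          rw [norm_mul]
          have h1 : ‖A.adjugate i j‖ = |M.adjugate i j| := by
            rw [hadjmap]; simp [Matrix.map_apply, Complex.norm_real]
          rw [h1, mul_comm]
          exact mul_le_mul_of_nonneg_left (hj i (mem_univ i)) (abs_nonneg _)
  have hcol2 : ‖A.det / μ‖ ≤ ∑ i, |M.adjugate i j| :=
    le_of_mul_le_mul_right (by linarith [hcol]) hwjpos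
  -- combinatorial bound on the adjugate column sum
  have hrow : ∀ i, 0 ≤ ∑ c, M i c := fun i => Finset.sum_nonneg fun c _ => hnn i c
  have hbound : ∑ i, |M.adjugate i j| ≤ ((k : ℝ) - 1)⁻¹ ^ (k - 1) :=
    (adj_col_bound M hnn j).trans
      (amgm_erase k hk (fun i => ∑ c, M i c) hrow hsum j)
  -- finish
  have hk1 : (0:ℝ) < (k : ℝ) - 1 := by
    have : (2:ℝ) ≤ (k:ℝ) := by exact_mod_cast hk
    linarith
  have hBpos : (0:ℝ) < ((k : ℝ) - 1)⁻¹ ^ (k - 1) := by positivity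
  have habsdet : ‖A.det‖ = |M.det| := by rw [hdetA, Complex.norm_real, Real.norm_eq_abs]
  have hdiv : ‖A.det / μ‖ = |M.det| / ‖μ‖ := by
    rw [norm_div, habsdet]
  rw [hdiv] at hcol2
  have hmupos : 0 < ‖μ‖ := by simpa [norm_pos_iff] using hmu0
  have h5 : |M.det| ≤ ((k : ℝ) - 1)⁻¹ ^ (k - 1) * ‖μ‖ := by
    rw [div_le_iff₀ hmupos] at hcol2
    exact hcol2.trans (mul_le_mul_of_nonneg_right hbound hmupos.le)
  calc c * ((k : ℝ) - 1) ^ (k - 1)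
      ≤ |M.det| * ((k : ℝ) - 1) ^ (k - 1) :=
        mul_le_mul_of_nonneg_right hdet (by positivity)
    _ ≤ (((k : ℝ) - 1)⁻¹ ^ (k - 1) * ‖μ‖) * ((k : ℝ) - 1) ^ (k - 1) :=
        mul_le_mul_of_nonneg_right h5 (by positivity)
    _ = ‖μ‖ := by
        have hone : ((k:ℝ)-1)⁻¹ ^ (k-1) * ((k:ℝ)-1)^(k-1) = 1 := by
          rw [← mul_pow, inv_mul_cancel₀ (ne_of_gt hk1), one_pow]
        calc (((k : ℝ) - 1)⁻¹ ^ (k - 1) * ‖μ‖) * ((k : ℝ) - 1) ^ (k - 1)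
            = (((k:ℝ)-1)⁻¹ ^ (k-1) * ((k:ℝ)-1)^(k-1)) * ‖μ‖ := by ring
          _ = ‖μ‖ := by rw [hone, one_mul]
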